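/- Triangular inequality for the inertia: for all x_1,…,x_k ∈ H_n with k ≥ 2 and all y ∈ H_n, (k-1) · m(x_1,…,x_k) ≤ ∑_{i=1}^k m(x_1,…,x_{i-1},y,x_{i+1},…,x_k), where in the i-th summand x_i is replaced by y. (Equivalently, r̄(x_1,…,x_k) ≤ (1/(k-1)) ∑_{i=1}^k r̄(x_1,…,x_{i-1},y,x_{i+1},…,x_k).) -/
import Mathlib

open Finset Function

/-- The inertia of a `k`-tuple of points of `H_n`: `min_y ∑ᵢ d(y, xᵢ)`
(the average radius is the inertia divided by `k`). -/
def inertia {n k : ℕ} (x : Fin k → Fin n → ZMod 2) : ℕ :=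
  Finset.inf' Finset.univ Finset.univ_nonempty
    (fun y : Fin n → ZMod 2 => ∑ i, hammingDist y (x i))


private lemma zmod2_ne_iff_zero (z : ZMod 2) : z ≠ 1 ↔ z = 0 := by revert z; decide

private lemma zmod2_ne_iff_one (z : ZMod 2) : z ≠ 0 ↔ z = 1 := by revert z; decide

private lemma zmod2_cases (z : ZMod 2) : z = 0 ∨ z = 1 := by revert z; decide

private lemma inertia_arith (A0 A1 : ℕ) :
    (A0 + A1 - 1) * min A0 A1 ≤ A1 * min A0 A1 + A0 * min (A0 - 1) (A1 + 1) := by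
  rcases Nat.eq_zero_or_pos A0 with h0 | h0
  · subst h0; simp
  rcases le_or_gt A0 A1 with h | h
  · rw [min_eq_left h, min_eq_left (by omega : A0 - 1 ≤ A1 + 1)]
    have h1 : A0 + A1 - 1 = A1 + (A0 - 1) := by omega
    rw [h1, Nat.add_mul, Nat.mul_comm (A0 - 1) A0]
  · rw [min_eq_right h.le]
    have hm : A1 ≤ min (A0 - 1) (A1 + 1) := le_min (by omega) (by omega)
    calc (A0 + A1 - 1) * A1 ≤ (A1 + A0) * A1 := by
            apply Nat.mul_le_mul_right; omega
      _ = A1 * A1 + A0 * A1 := by ring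
      _ ≤ A1 * A1 + A0 * min (A0 - 1) (A1 + 1) :=
            Nat.add_le_add_left (Nat.mul_le_mul_left _ hm) _

private lemma sum_dist_eq {n k : ℕ} (x : Fin k → Fin n → ZMod 2) (y : Fin n → ZMod 2) :
    ∑ i, hammingDist y (x i)
      = ∑ c, (Finset.univ.filter fun i => x i c ≠ y c).card := by
  simp only [hammingDist, Finset.card_filter]
  rw [Finset.sum_comm]
  congr 1; ext c; congr 1; ext i
  simp [ne_comm]

private lemma inertia_eq {n k : ℕ} (x : Fin k → Fin n → ZMod 2) :
    inertia x = ∑ c, min ((Finset.univ.filter fun i => x i c = 0).card)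
      ((Finset.univ.filter fun i => x i c = 1).card) := by
  apply le_antisymm
  · apply Finset.inf'_le_of_le (b := fun c =>
      if ((Finset.univ.filter fun i => x i c = 0).card)
          ≤ ((Finset.univ.filter fun i => x i c = 1).card) then 1 else 0)
    · exact Finset.mem_univ _
    rw [sum_dist_eq]
    apply le_of_eq
    apply Finset.sum_congr rfl
    intro c _
    split_ifs with h
    · rw [min_eq_left h]
      congr 1
      apply Finset.filter_congr
      intro i _
      simp [zmod2_ne_iff_zero]
    · rw [min_eq_right (le_of_not_ge h)]
      congr 1
      apply Finset.filter_congr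
      intro i _
      simp [zmod2_ne_iff_one]
  · apply Finset.le_inf'
    intro y _
    rw [sum_dist_eq]
    apply Finset.sum_le_sum
    intro c _
    rcases zmod2_cases (y c) with h | h
    · rw [h]
      refine le_trans (min_le_right _ _) (le_of_eq ?_)
      congr 1
      apply Finset.filter_congr
      intro i _
      simp [zmod2_ne_iff_one]
    · rw [h]
      refine le_trans (min_le_left _ _) (le_of_eq ?_)
      congr 1
      apply Finset.filter_congr
      intro i _
      simp [zmod2_ne_iff_zero]

private lemma key_coord {k : ℕ} (a : Fin k → ZMod 2) (b : ZMod 2) :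
    (k - 1) * min ((Finset.univ.filter fun j => a j = 0).card)
        ((Finset.univ.filter fun j => a j = 1).card)
      ≤ ∑ i, min ((Finset.univ.filter fun j => Function.update a i b j = 0).card)
          ((Finset.univ.filter fun j => Function.update a i b j = 1).card) := by
  set A0 := (Finset.univ.filter fun j => a j = 0).card with hA0
  set A1 := (Finset.univ.filter fun j => a j = 1).card with hA1
  have hk : A0 + A1 = k := by
    have h0 : (Finset.univ.filter fun j => a j = 0)
        = (Finset.univ.filter fun j => ¬ (a j = 1)) := by
      apply Finset.filter_congr; intro i _
      exact (iff_comm.mp (zmod2_ne_iff_zero (a i)))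
    have h := Finset.card_filter_add_card_filter_not
      (s := (Finset.univ : Finset (Fin k))) (p := fun j => a j = 1)
    rw [hA0, hA1, h0, Nat.add_comm]
    simpa using h
  -- split the sum according to whether `a i = b`
  have hsplit : ∀ i : Fin k, a i = b → Function.update a i b = a := by
    intro i h; rw [← h]; exact Function.update_eq_self i a
  rcases zmod2_cases b with hb | hb
  · -- b = 0
    subst hb
    rw [← Finset.sum_filter_add_sum_filter_not Finset.univ (fun i => a i = 0)]
    have h1 : ∀ i ∈ Finset.univ.filter (fun i => a i = 0),
        min ((Finset.univ.filter fun j => Function.update a i (0:ZMod 2) j = 0).card)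
          ((Finset.univ.filter fun j => Function.update a i (0:ZMod 2) j = 1).card)
        = min A0 A1 := by
      intro i hi
      rw [Finset.mem_filter] at hi
      rw [hsplit i hi.2]
    have h2 : ∀ i ∈ Finset.univ.filter (fun i => ¬ a i = 0),
        min ((Finset.univ.filter fun j => Function.update a i (0:ZMod 2) j = 0).card)
          ((Finset.univ.filter fun j => Function.update a i (0:ZMod 2) j = 1).card)
        = min (A0 + 1) (A1 - 1) := by
      intro i hi
      simp only [Finset.mem_filter, Finset.mem_univ, true_and] at hi
      replace hi : a i = 1 := (zmod2_ne_iff_one (a i)).mp hi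
      have e0 : (Finset.univ.filter fun j => Function.update a i (0:ZMod 2) j = 0)
          = insert i (Finset.univ.filter fun j => a j = 0) := by
        ext j
        by_cases hj : j = i
        · subst hj; simp [Function.update_self]
        · simp [Function.update_of_ne hj, hj]
      have e1 : (Finset.univ.filter fun j => Function.update a i (0:ZMod 2) j = 1)
          = (Finset.univ.filter fun j => a j = 1).erase i := by
        ext j
        by_cases hj : j = i
        · subst hj; simp [Function.update_self]
        · simp [Function.update_of_ne hj, hj]
      rw [e0, e1, Finset.card_insert_of_notMem (by simp [hi]),
        Finset.card_erase_of_mem (by simp [hi])]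
    rw [Finset.sum_congr rfl h1, Finset.sum_congr rfl h2, Finset.sum_const, Finset.sum_const,
      smul_eq_mul, smul_eq_mul]
    have hc0 : (Finset.univ.filter fun i => a i = 0).card = A0 := rfl
    have hc1 : (Finset.univ.filter fun i => ¬ a i = 0).card = A1 := by
      rw [hA1]; congr 1; apply Finset.filter_congr; intro i _; simp [zmod2_ne_iff_one]
    rw [hc0, hc1, ← hk]
    have := inertia_arith A1 A0
    rw [min_comm A1 A0] at this
    calc (A0 + A1 - 1) * min A0 A1 = (A1 + A0 - 1) * min A0 A1 := by rw [Nat.add_comm]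
      _ ≤ A0 * min A0 A1 + A1 * min (A1 - 1) (A0 + 1) := this
      _ = A0 * min A0 A1 + A1 * min (A0 + 1) (A1 - 1) := by rw [min_comm (A1-1)]
  · -- b = 1
    subst hb
    rw [← Finset.sum_filter_add_sum_filter_not Finset.univ (fun i => a i = 1)]
    have h1 : ∀ i ∈ Finset.univ.filter (fun i => a i = 1),
        min ((Finset.univ.filter fun j => Function.update a i (1:ZMod 2) j = 0).card)
          ((Finset.univ.filter fun j => Function.update a i (1:ZMod 2) j = 1).card)
        = min A0 A1 := by
      intro i hi
      rw [Finset.mem_filter] at hi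
      rw [hsplit i hi.2]
    have h2 : ∀ i ∈ Finset.univ.filter (fun i => ¬ a i = 1),
        min ((Finset.univ.filter fun j => Function.update a i (1:ZMod 2) j = 0).card)
          ((Finset.univ.filter fun j => Function.update a i (1:ZMod 2) j = 1).card)
        = min (A0 - 1) (A1 + 1) := by
      intro i hi
      simp only [Finset.mem_filter, Finset.mem_univ, true_and] at hi
      replace hi : a i = 0 := (zmod2_ne_iff_zero (a i)).mp hi
      have e1 : (Finset.univ.filter fun j => Function.update a i (1:ZMod 2) j = 1)
          = insert i (Finset.univ.filter fun j => a j = 1) := by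
        ext j
        by_cases hj : j = i
        · subst hj; simp [Function.update_self]
        · simp [Function.update_of_ne hj, hj]
      have e0 : (Finset.univ.filter fun j => Function.update a i (1:ZMod 2) j = 0)
          = (Finset.univ.filter fun j => a j = 0).erase i := by
        ext j
        by_cases hj : j = i
        · subst hj; simp [Function.update_self]
        · simp [Function.update_of_ne hj, hj]
      rw [e0, e1, Finset.card_insert_of_notMem (by simp [hi]),
        Finset.card_erase_of_mem (by simp [hi])]
    rw [Finset.sum_congr rfl h1, Finset.sum_congr rfl h2, Finset.sum_const, Finset.sum_const,
      smul_eq_mul, smul_eq_mul]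
    have hc1 : (Finset.univ.filter fun i => a i = 1).card = A1 := rfl
    have hc0 : (Finset.univ.filter fun i => ¬ a i = 1).card = A0 := by
      rw [hA0]; congr 1; apply Finset.filter_congr; intro i _; simp [zmod2_ne_iff_zero]
    rw [hc1, hc0, ← hk]
    exact inertia_arith A0 A1

/-- Triangular inequality for the inertia:
`(k-1)·m(x₁,…,x_k) ≤ ∑ᵢ m(x₁,…,x_{i-1}, y, x_{i+1},…,x_k)`. -/
theorem inertia_triangle {n k : ℕ} (hk : 2 ≤ k)
    (x : Fin k → Fin n → ZMod 2) (y : Fin n → ZMod 2) :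
    (k - 1) * inertia x ≤ ∑ i : Fin k, inertia (Function.update x i y) := by
  rw [inertia_eq x]
  have hupd : ∀ i, inertia (Function.update x i y)
      = ∑ c, min ((Finset.univ.filter fun j => Function.update (fun j => x j c) i (y c) j = 0).card)
          ((Finset.univ.filter fun j => Function.update (fun j => x j c) i (y c) j = 1).card) := by
    intro i
    rw [inertia_eq]
    apply Finset.sum_congr rfl
    intro c _
    congr 1 <;> · congr 1; apply Finset.filter_congr; intro j _
                  simp only [Function.update_apply]
                  split <;> rfl
  simp only [hupd]
  rw [Finset.sum_comm, Finset.mul_sum]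
  apply Finset.sum_le_sum
  intro c _
  exact key_coord (fun j => x j c) (y c)
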